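/- Let H = H₁ ⊗ H₂ ⊗ ⋯ ⊗ Hₙ be a tensor product of finite-dimensional complex inner product spaces, each of dimension ≥ 2, and let ψ₁, ψ₂, ψ₃ ∈ H be linearly independent. Then there exists x ∈ {1,2,3} and a fully product vector φ = a₁ ⊗ ⋯ ⊗ aₙ such that ⟨ψᵢ, φ⟩ = 0 for both i ≠ x and ⟨ψₓ, φ⟩ ≠ 0. -/

import Mathlib

/-- The fully product vector `a₁ ⊗ ⋯ ⊗ aₙ` in the multipartite space
`EuclideanSpace ℂ (∀ j, ι j)` (which carries the induced tensor inner product). -/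
noncomputable def prodVec {n : ℕ} {ι : Fin n → Type*} [∀ j, Fintype (ι j)]
    (a : ∀ j, EuclideanSpace ℂ (ι j)) :
    EuclideanSpace ℂ (∀ j, ι j) :=
  WithLp.toLp 2 (fun f => ∏ j, a j (f j))





namespace Stmt19

variable {κ : Type*}

/-- Two vectors in a function space are linearly dependent. -/
def Dep (u w : κ → ℂ) : Prop :=
  ∃ s t : ℂ, (s ≠ 0 ∨ t ≠ 0) ∧ s • u + t • w = 0

lemma Dep.symm {u w : κ → ℂ} (h : Dep u w) : Dep w u := by
  obtain ⟨s, t, hst, hsum⟩ := h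
  exact ⟨t, s, hst.symm, by rw [add_comm]; exact hsum⟩

lemma dep_zero_left (w : κ → ℂ) : Dep 0 w :=
  ⟨1, 0, Or.inl one_ne_zero, by simp⟩

lemma dep_zero_right (u : κ → ℂ) : Dep u 0 := (dep_zero_left u).symm

lemma not_dep_ne_left {u w : κ → ℂ} (h : ¬ Dep u w) : u ≠ 0 :=
  fun h0 => h (h0 ▸ dep_zero_left w)

lemma not_dep_ne_right {u w : κ → ℂ} (h : ¬ Dep u w) : w ≠ 0 :=
  fun h0 => h (h0 ▸ dep_zero_right u)

lemma not_dep_coeffs {u w : κ → ℂ} (h : ¬ Dep u w) {s t : ℂ}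
    (hsum : s • u + t • w = 0) : s = 0 ∧ t = 0 := by
  by_contra hc
  rcases not_and_or.mp hc with hs | ht
  · exact h ⟨s, t, Or.inl hs, hsum⟩
  · exact h ⟨s, t, Or.inr ht, hsum⟩

lemma Dep.resolve {u w : κ → ℂ} (h : Dep u w) (hu : u ≠ 0) : ∃ c : ℂ, w = c • u := by
  obtain ⟨s, t, hst, hsum⟩ := h
  by_cases ht : t = 0
  · subst ht
    have hs : s ≠ 0 := hst.resolve_right (fun h => h rfl)
    exfalso; apply hu
    have : s • u = 0 := by simpa using hsum
    exact (smul_eq_zero.mp this).resolve_left hs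
  · refine ⟨-s / t, ?_⟩
    funext p
    have := congrFun hsum p
    simp only [Pi.add_apply, Pi.smul_apply, smul_eq_mul, Pi.zero_apply] at this ⊢
    field_simp
    linear_combination this

lemma dep_smul_cancel {u w : κ → ℂ} {s t : ℂ} (h : Dep (s • u) (t • w))
    (hs : s ≠ 0) (ht : t ≠ 0) : Dep u w := by
  obtain ⟨a, b, hab, hsum⟩ := h
  refine ⟨a * s, b * t, ?_, ?_⟩
  · rcases hab with ha | hb
    · exact Or.inl (mul_ne_zero ha hs)
    · exact Or.inr (mul_ne_zero hb ht)
  · funext p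
    have := congrFun hsum p
    simp only [Pi.add_apply, Pi.smul_apply, smul_eq_mul, Pi.zero_apply] at this ⊢
    linear_combination this

lemma dep_of_minors {u w : κ → ℂ} (h : ∀ p q, u p * w q = u q * w p) : Dep u w := by
  by_cases hu : u = 0
  · exact hu ▸ dep_zero_left w
  · obtain ⟨p₀, hp₀⟩ := Function.ne_iff.mp hu
    simp only [Pi.zero_apply] at hp₀
    refine ⟨w p₀, -(u p₀), Or.inr (neg_ne_zero.mpr hp₀), ?_⟩
    funext q
    simp only [Pi.add_apply, Pi.smul_apply, smul_eq_mul, Pi.zero_apply, neg_mul]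
    have := h p₀ q
    linear_combination -this

end Stmt19
namespace Stmt19

variable {κ : Type*} {V : Type*} [AddCommGroup V] [Module ℂ V]

lemma not_dep_symm {u w : κ → ℂ} (h : ¬ Dep u w) : ¬ Dep w u := fun h' => h h'.symm

/-- Two pointwise-dependent linear maps, the first of rank ≥ 2, are proportional. -/
lemma L2 (A B : V →ₗ[ℂ] (κ → ℂ)) (hdep : ∀ x, Dep (A x) (B x))
    (x₀ y₀ : V) (hind : ¬ Dep (A x₀) (A y₀)) :
    ∃ c : ℂ, ∀ x, B x = c • A x := by
  have hAx₀ : A x₀ ≠ 0 := not_dep_ne_left hind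
  have hAy₀ : A y₀ ≠ 0 := not_dep_ne_right hind
  have coeff : ∀ x, A x ≠ 0 → ∃ c, B x = c • A x := fun x hx => (hdep x).resolve hx
  have key : ∀ x y (cx cy : ℂ), ¬ Dep (A x) (A y) → B x = cx • A x → B y = cy • A y →
      cx = cy := by
    intro x y cx cy hxy hbx hby
    have hne : A (x + y) ≠ 0 := by
      rw [map_add]
      intro h0
      have : (1 : ℂ) • A x + (1 : ℂ) • A y = 0 := by simpa using h0
      exact one_ne_zero (not_dep_coeffs hxy this).1
    obtain ⟨c, hc⟩ := coeff (x + y) hne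
    rw [map_add, map_add, hbx, hby] at hc
    have hsum : (cx - c) • A x + (cy - c) • A y = 0 := by
      funext p
      have h1 := congrFun hc p
      simp only [Pi.add_apply, Pi.smul_apply, smul_eq_mul, Pi.zero_apply] at h1 ⊢
      linear_combination h1
    obtain ⟨h1, h2⟩ := not_dep_coeffs hxy hsum
    rw [sub_eq_zero] at h1 h2
    rw [h1, h2]
  obtain ⟨c, hc₀⟩ := coeff x₀ hAx₀
  obtain ⟨cy, hcy⟩ := coeff y₀ hAy₀
  have hcyc : cy = c := key y₀ x₀ cy c (not_dep_symm hind) hcy hc₀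
  rw [hcyc] at hcy
  clear hcyc
  refine ⟨c, fun x => ?_⟩
  by_cases hx : A x = 0
  · -- show B x = 0
    have hne : ¬ Dep (A (x + y₀)) (A x₀) := by
      rw [map_add, hx, zero_add]; exact not_dep_symm hind
    have hAxy : A (x + y₀) ≠ 0 := not_dep_ne_left hne
    obtain ⟨cz, hcz⟩ := coeff (x + y₀) hAxy
    have hczc : cz = c := key (x + y₀) x₀ cz c hne hcz hc₀
    rw [hczc] at hcz
    rw [map_add, map_add, hx, zero_add] at hcz
    have hBx : B x = 0 := by
      rw [hcy] at hcz
      exact add_right_cancel (b := c • A y₀) (c := 0) (by rw [zero_add]; exact hcz)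
    rw [hBx, hx, smul_zero]
  · obtain ⟨cx, hcx⟩ := coeff x hx
    by_cases hxx : Dep (A x) (A x₀)
    · have hnd : ¬ Dep (A x) (A y₀) := by
        intro hcon
        apply hind
        obtain ⟨c₁, e₁⟩ := hxx.resolve hx
        obtain ⟨c₂, e₂⟩ := hcon.resolve hx
        have hc₁ : c₁ ≠ 0 := by
          intro h0; apply hAx₀; rw [e₁, h0, zero_smul]
        refine ⟨c₂, -c₁, Or.inr (neg_ne_zero.mpr hc₁), ?_⟩
        rw [e₁, e₂]
        funext p
        simp only [Pi.add_apply, Pi.smul_apply, smul_eq_mul, Pi.zero_apply]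
        ring
      have := key x y₀ cx c hnd hcx hcy
      rw [hcx, this]
    · have := key x x₀ cx c hxx hcx hc₀
      rw [hcx, this]

/-- A rank-≤1 map through a fixed direction `r` is given by a linear functional. -/
lemma scalarize (A : V →ₗ[ℂ] (κ → ℂ)) (r : κ → ℂ) (p₀ : κ) (hr : r p₀ ≠ 0)
    (h : ∀ x, ∃ c : ℂ, A x = c • r) :
    ∃ f : V →ₗ[ℂ] ℂ, ∀ x, A x = f x • r := by
  refine ⟨(r p₀)⁻¹ • ((LinearMap.proj p₀).comp A), fun x => ?_⟩
  obtain ⟨c, hc⟩ := h x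
  rw [hc]
  congr 1
  simp only [LinearMap.smul_apply, LinearMap.comp_apply, LinearMap.proj_apply, hc,
    Pi.smul_apply, smul_eq_mul]
  field_simp

lemma fk (f g : V →ₗ[ℂ] ℂ) (hyp : ∀ a, f a = 0 → g a = 0) :
    ∃ c : ℂ, ∀ a, g a = c * f a := by
  by_cases hf : ∃ u, f u ≠ 0
  · obtain ⟨u, hu⟩ := hf
    refine ⟨g u / f u, fun a => ?_⟩
    have h0 : f (a - (f a / f u) • u) = 0 := by
      simp only [map_sub, map_smul, smul_eq_mul]
      field_simp
      ring
    have h1 := hyp _ h0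
    simp only [map_sub, map_smul, smul_eq_mul] at h1
    field_simp at h1 ⊢
    linear_combination h1
  · push_neg at hf
    exact ⟨0, fun a => by rw [hyp a (hf a), zero_mul]⟩

lemma ker2 (f g h : V →ₗ[ℂ] ℂ) (hyp : ∀ a, g a = 0 → h a = 0 → f a = 0) :
    ∃ c d : ℂ, ∀ a, f a = c * g a + d * h a := by
  by_cases hg : ∃ u, g u ≠ 0
  · obtain ⟨u₀, hu₀⟩ := hg
    set u := (g u₀)⁻¹ • u₀ with hu_def
    have hgu : g u = 1 := by simp [hu_def, map_smul, smul_eq_mul]; field_simp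
    by_cases hh : ∃ w, h w - h u * g w ≠ 0
    · obtain ⟨w, hw⟩ := hh
      set a₂ := (h w - h u * g w)⁻¹ • (w - (g w) • u) with ha₂
      have hga₂ : g a₂ = 0 := by
        simp only [ha₂, map_smul, map_sub, smul_eq_mul, hgu]
        ring
      have hha₂ : h a₂ = 1 := by
        simp only [ha₂, map_smul, map_sub, smul_eq_mul]
        field_simp
      set a₁ := u - (h u) • a₂ with ha₁
      have hga₁ : g a₁ = 1 := by
        simp only [ha₁, map_sub, map_smul, smul_eq_mul, hgu, hga₂]
        ring
      have hha₁ : h a₁ = 0 := by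
        simp only [ha₁, map_sub, map_smul, smul_eq_mul, hha₂]
        ring
      refine ⟨f a₁, f a₂, fun a => ?_⟩
      have hz : f (a - (g a) • a₁ - (h a) • a₂) = 0 := by
        apply hyp
        · simp only [map_sub, map_smul, smul_eq_mul, hga₁, hga₂]; ring
        · simp only [map_sub, map_smul, smul_eq_mul, hha₁, hha₂]; ring
      simp only [map_sub, map_smul, smul_eq_mul] at hz
      linear_combination hz
    · push_neg at hh
      have hc := fk g f (fun a ha => hyp a ha (by
        have := hh a
        rw [sub_eq_zero] at this
        rw [this, ha, mul_zero]))
      obtain ⟨c, hc⟩ := hc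
      exact ⟨c, 0, fun a => by rw [hc a]; ring⟩
  · push_neg at hg
    obtain ⟨c, hc⟩ := fk h f (fun a ha => hyp a (hg a) ha)
    exact ⟨0, c, fun a => by rw [hc a]; ring⟩

lemma two_nonzero (f g : V →ₗ[ℂ] ℂ) {x₁ x₂ : V} (h₁ : f x₁ ≠ 0) (h₂ : g x₂ ≠ 0) :
    ∃ x, f x ≠ 0 ∧ g x ≠ 0 := by
  by_cases hg₁ : g x₁ ≠ 0
  · exact ⟨x₁, h₁, hg₁⟩
  by_cases hf₂ : f x₂ ≠ 0
  · exact ⟨x₂, hf₂, h₂⟩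
  push_neg at hg₁ hf₂
  refine ⟨x₁ + x₂, ?_, ?_⟩
  · rw [map_add, hf₂, add_zero]; exact h₁
  · rw [map_add, hg₁, zero_add]; exact h₂

end Stmt19
namespace Stmt19

variable {κ : Type*} {V : Type*} [AddCommGroup V] [Module ℂ V]

/-- The "everywhere rank ≤ 1" case of the no-pivot analysis. -/
lemma calpha (S₀ S₁ S₂ : V →ₗ[ℂ] (κ → ℂ))
    (np₀ : ∀ a, ∃ α β : ℂ, S₀ a = α • S₁ a + β • S₂ a)
    (d01 : ∀ a, Dep (S₀ a) (S₁ a)) (d02 : ∀ a, Dep (S₀ a) (S₂ a))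
    (d12 : ∀ a, Dep (S₁ a) (S₂ a)) :
    ∃ γ₀ γ₁ γ₂ : ℂ, (γ₀ ≠ 0 ∨ γ₁ ≠ 0 ∨ γ₂ ≠ 0) ∧
      ∀ a, γ₀ • S₀ a + γ₁ • S₁ a + γ₂ • S₂ a = 0 := by
  by_cases h0 : ∀ a, S₀ a = 0
  · exact ⟨1, 0, 0, Or.inl one_ne_zero, fun a => by rw [h0 a]; simp⟩
  by_cases h1 : ∀ a, S₁ a = 0
  · exact ⟨0, 1, 0, Or.inr (Or.inl one_ne_zero), fun a => by rw [h1 a]; simp⟩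
  by_cases h2 : ∀ a, S₂ a = 0
  · exact ⟨0, 0, 1, Or.inr (Or.inr one_ne_zero), fun a => by rw [h2 a]; simp⟩
  push_neg at h0 h1 h2
  obtain ⟨a₀, ha₀⟩ := h0
  obtain ⟨a₁, ha₁⟩ := h1
  obtain ⟨a₂, ha₂⟩ := h2
  by_cases r0 : ∃ x y, ¬ Dep (S₀ x) (S₀ y)
  · obtain ⟨x, y, hxy⟩ := r0
    obtain ⟨c, hc⟩ := L2 S₀ S₁ d01 x y hxy
    refine ⟨c, -1, 0, Or.inr (Or.inl (neg_ne_zero.mpr one_ne_zero)), fun a => ?_⟩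
    rw [hc a]
    funext p
    simp only [Pi.add_apply, Pi.smul_apply, smul_eq_mul, Pi.zero_apply]
    ring
  by_cases r1 : ∃ x y, ¬ Dep (S₁ x) (S₁ y)
  · obtain ⟨x, y, hxy⟩ := r1
    obtain ⟨c, hc⟩ := L2 S₁ S₀ (fun a => (d01 a).symm) x y hxy
    refine ⟨-1, c, 0, Or.inl (neg_ne_zero.mpr one_ne_zero), fun a => ?_⟩
    rw [hc a]
    funext p
    simp only [Pi.add_apply, Pi.smul_apply, smul_eq_mul, Pi.zero_apply]
    ring
  by_cases r2 : ∃ x y, ¬ Dep (S₂ x) (S₂ y)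
  · obtain ⟨x, y, hxy⟩ := r2
    obtain ⟨c, hc⟩ := L2 S₂ S₀ (fun a => (d02 a).symm) x y hxy
    refine ⟨-1, 0, c, Or.inl (neg_ne_zero.mpr one_ne_zero), fun a => ?_⟩
    rw [hc a]
    funext p
    simp only [Pi.add_apply, Pi.smul_apply, smul_eq_mul, Pi.zero_apply]
    ring
  push_neg at r0 r1 r2
  -- all three maps have rank ≤ 1
  obtain ⟨p₀, hp₀⟩ : ∃ p, S₀ a₀ p ≠ 0 := by
    have := Function.ne_iff.mp ha₀; simpa using this
  obtain ⟨p₁, hp₁⟩ : ∃ p, S₁ a₁ p ≠ 0 := by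
    have := Function.ne_iff.mp ha₁; simpa using this
  obtain ⟨p₂, hp₂⟩ : ∃ p, S₂ a₂ p ≠ 0 := by
    have := Function.ne_iff.mp ha₂; simpa using this
  obtain ⟨f₀, hf₀⟩ := scalarize S₀ (S₀ a₀) p₀ hp₀ (fun x => (r0 a₀ x).resolve ha₀)
  obtain ⟨f₁, hf₁⟩ := scalarize S₁ (S₁ a₁) p₁ hp₁ (fun x => (r1 a₁ x).resolve ha₁)
  obtain ⟨f₂, hf₂⟩ := scalarize S₂ (S₂ a₂) p₂ hp₂ (fun x => (r2 a₂ x).resolve ha₂)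
  have hf₀a₀ : f₀ a₀ ≠ 0 := by
    intro h; apply ha₀; rw [hf₀ a₀, h, zero_smul]
  have hf₁a₁ : f₁ a₁ ≠ 0 := by
    intro h; apply ha₁; rw [hf₁ a₁, h, zero_smul]
  have hf₂a₂ : f₂ a₂ ≠ 0 := by
    intro h; apply ha₂; rw [hf₂ a₂, h, zero_smul]
  -- common direction
  have hr1 : ∃ c : ℂ, c ≠ 0 ∧ S₁ a₁ = c • S₀ a₀ := by
    obtain ⟨x, hx0, hx1⟩ := two_nonzero f₀ f₁ hf₀a₀ hf₁a₁
    have hdep : Dep (S₀ a₀) (S₁ a₁) := by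
      have := d01 x
      rw [hf₀ x, hf₁ x] at this
      exact dep_smul_cancel this hx0 hx1
    obtain ⟨c, hc⟩ := hdep.resolve ha₀
    refine ⟨c, ?_, hc⟩
    intro h; apply ha₁; rw [hc, h, zero_smul]
  have hr2 : ∃ c : ℂ, c ≠ 0 ∧ S₂ a₂ = c • S₀ a₀ := by
    obtain ⟨x, hx0, hx2⟩ := two_nonzero f₀ f₂ hf₀a₀ hf₂a₂
    have hdep : Dep (S₀ a₀) (S₂ a₂) := by
      have := d02 x
      rw [hf₀ x, hf₂ x] at this
      exact dep_smul_cancel this hx0 hx2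
    obtain ⟨c, hc⟩ := hdep.resolve ha₀
    refine ⟨c, ?_, hc⟩
    intro h; apply ha₂; rw [hc, h, zero_smul]
  obtain ⟨c₁, hc₁ne, hc₁⟩ := hr1
  obtain ⟨c₂, hc₂ne, hc₂⟩ := hr2
  -- kernel condition for ker2
  have hker : ∀ a, f₁ a = 0 → f₂ a = 0 → f₀ a = 0 := by
    intro a k1 k2
    obtain ⟨α, β, hαβ⟩ := np₀ a
    rw [hf₀ a, hf₁ a, hf₂ a, k1, k2] at hαβ
    simp only [zero_smul, smul_zero, add_zero] at hαβ
    exact (smul_eq_zero.mp hαβ).resolve_right ha₀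
  obtain ⟨c, d, hcd⟩ := ker2 f₀ f₁ f₂ hker
  refine ⟨1, -(c / c₁), -(d / c₂), Or.inl one_ne_zero, fun a => ?_⟩
  rw [hf₀ a, hf₁ a, hf₂ a, hc₁, hc₂, hcd a]
  funext p
  simp only [Pi.add_apply, Pi.smul_apply, smul_eq_mul, Pi.zero_apply]
  field_simp
  ring

end Stmt19

namespace Stmt19

lemma exists_sqrt (w : ℂ) : ∃ z : ℂ, z ^ 2 = w :=
  IsAlgClosed.exists_pow_nat_eq w (n := 2) (by norm_num)

/-- Factorization of a nonzero binary quadratic form over ℂ. -/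
lemma fact2 (A B C : ℂ) (h : ¬ (A = 0 ∧ B = 0 ∧ C = 0)) :
    ∃ d e f g : ℂ, (¬ (d = 0 ∧ e = 0)) ∧ (¬ (f = 0 ∧ g = 0)) ∧
      ∀ s t : ℂ, A * s ^ 2 + B * s * t + C * t ^ 2 = (d * s + e * t) * (f * s + g * t) := by
  by_cases hA : A = 0
  · refine ⟨0, 1, B, C, ?_, ?_, ?_⟩
    · intro hc; exact one_ne_zero hc.2
    · intro hc; exact h ⟨hA, hc.1, hc.2⟩
    · intro s t; rw [hA]; ring
  · obtain ⟨z, hz⟩ := exists_sqrt (B ^ 2 - 4 * A * C)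
    refine ⟨A, (B - z) / 2, 1, (B + z) / (2 * A), ?_, ?_, ?_⟩
    · intro hc; exact hA hc.1
    · intro hc; exact one_ne_zero hc.1
    · intro s t
      field_simp
      ring_nf
      linear_combination t ^ 2 * hz

/-- Two nonzero linear forms on ℂ² with a common nontrivial root are proportional. -/
lemma lin_prop (d e d' e' v₁ v₂ : ℂ) (hv : ¬ (v₁ = 0 ∧ v₂ = 0))
    (h1 : d * v₁ + e * v₂ = 0) (h2 : d' * v₁ + e' * v₂ = 0)
    (hde : ¬ (d = 0 ∧ e = 0)) (hde' : ¬ (d' = 0 ∧ e' = 0)) :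
    ∃ u : ℂ, u ≠ 0 ∧ d' = u * d ∧ e' = u * e := by
  by_cases hv₁ : v₁ = 0
  · have hv₂ : v₂ ≠ 0 := fun h => hv ⟨hv₁, h⟩
    rw [hv₁, mul_zero, zero_add] at h1 h2
    have he : e = 0 := by
      rcases mul_eq_zero.mp h1 with h | h
      · exact h
      · exact absurd h hv₂
    have he' : e' = 0 := by
      rcases mul_eq_zero.mp h2 with h | h
      · exact h
      · exact absurd h hv₂
    have hd : d ≠ 0 := fun h => hde ⟨h, he⟩
    have hd' : d' ≠ 0 := fun h => hde' ⟨h, he'⟩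
    exact ⟨d' / d, div_ne_zero hd' hd, by field_simp, by rw [he, he', mul_zero]⟩
  · have he : e ≠ 0 := by
      intro h
      rw [h, zero_mul, add_zero] at h1
      exact hde ⟨(mul_eq_zero.mp h1).resolve_right hv₁, h⟩
    have he' : e' ≠ 0 := by
      intro h
      rw [h, zero_mul, add_zero] at h2
      exact hde' ⟨(mul_eq_zero.mp h2).resolve_right hv₁, h⟩
    refine ⟨e' / e, div_ne_zero he' he, ?_, by field_simp⟩
    field_simp
    have hcan : (d' * e) * v₁ = (e' * d) * v₁ := by linear_combination e * h2 - e' * h1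
    exact mul_right_cancel₀ hv₁ hcan

end Stmt19
namespace Stmt19

lemma divides_factor (d e f g a b : ℂ) (hde : ¬ (d = 0 ∧ e = 0)) (hfg : ¬ (f = 0 ∧ g = 0))
    (hab : ¬ (a = 0 ∧ b = 0))
    (hroot : (d * b + e * (-a)) * (f * b + g * (-a)) = 0) :
    (∃ u : ℂ, u ≠ 0 ∧ a = u * d ∧ b = u * e) ∨ (∃ u : ℂ, u ≠ 0 ∧ a = u * f ∧ b = u * g) := by
  have hv : ¬ (b = 0 ∧ -a = 0) := by
    intro hc; exact hab ⟨neg_eq_zero.mp hc.2, hc.1⟩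
  rcases mul_eq_zero.mp hroot with h | h
  · left
    obtain ⟨u, hu, h1, h2⟩ := lin_prop d e a b b (-a) hv h (by ring) hde hab
    exact ⟨u, hu, h1, h2⟩
  · right
    obtain ⟨u, hu, h1, h2⟩ := lin_prop f g a b b (-a) hv h (by ring) hfg hab
    exact ⟨u, hu, h1, h2⟩

/-- Binary quadratics over ℂ with identical zero sets are proportional. -/
lemma bq (A B C A' B' C' : ℂ)
    (hiff : ∀ s t : ℂ, A * s ^ 2 + B * s * t + C * t ^ 2 = 0 ↔
      A' * s ^ 2 + B' * s * t + C' * t ^ 2 = 0)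
    (hne : ∃ s t, A * s ^ 2 + B * s * t + C * t ^ 2 ≠ 0) :
    ∃ u : ℂ, u ≠ 0 ∧ ∀ s t : ℂ, A' * s ^ 2 + B' * s * t + C' * t ^ 2 =
      u * (A * s ^ 2 + B * s * t + C * t ^ 2) := by
  have hco : ¬ (A = 0 ∧ B = 0 ∧ C = 0) := by
    rintro ⟨rfl, rfl, rfl⟩
    obtain ⟨s, t, h⟩ := hne
    apply h; ring
  have hco' : ¬ (A' = 0 ∧ B' = 0 ∧ C' = 0) := by
    rintro ⟨rfl, rfl, rfl⟩
    obtain ⟨s, t, h⟩ := hne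
    apply h
    rw [hiff s t]; ring
  obtain ⟨d, e, f, g, hde, hfg, hfact⟩ := fact2 A B C hco
  obtain ⟨d', e', f', g', hde', hfg', hfact'⟩ := fact2 A' B' C' hco'
  -- roots of primed factors are roots of the unprimed quadratic
  have hr1 : (d * e' + e * (-d')) * (f * e' + g * (-d')) = 0 := by
    rw [← hfact]
    rw [hiff, hfact']
    ring
  have hr2 : (d * g' + e * (-f')) * (f * g' + g * (-f')) = 0 := by
    rw [← hfact, hiff, hfact']
    ring
  have hr3 : (d' * e + e' * (-d)) * (f' * e + g' * (-d)) = 0 := by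
    rw [← hfact', ← hiff, hfact]
    ring
  have hr4 : (d' * g + e' * (-f)) * (f' * g + g' * (-f)) = 0 := by
    rw [← hfact', ← hiff, hfact]
    ring
  rcases divides_factor d e f g d' e' hde hfg hde' hr1 with ⟨u₁, hu₁, h1a, h1b⟩ | ⟨u₁, hu₁, h1a, h1b⟩
  · rcases divides_factor d e f g f' g' hde hfg hfg' hr2 with ⟨u₂, hu₂, h2a, h2b⟩ | ⟨u₂, hu₂, h2a, h2b⟩
    · -- q' = u₁ u₂ (ds+et)^2 ; show (f,g) ∝ (d,e) using hr4
      rcases divides_factor d' e' f' g' f g hde' hfg' hfg hr4 with ⟨w, hw, hwa, hwb⟩ | ⟨w, hw, hwa, hwb⟩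
      · -- f = w * d' = w u₁ d etc.
        refine ⟨u₁ * u₂ / (w * u₁), by
          apply div_ne_zero (mul_ne_zero hu₁ hu₂) (mul_ne_zero hw hu₁), fun s t => ?_⟩
        rw [hfact', hfact, h1a, h1b, h2a, h2b, hwa, hwb, h1a, h1b]
        field_simp
      · refine ⟨u₁ * u₂ / (w * u₂), by
          apply div_ne_zero (mul_ne_zero hu₁ hu₂) (mul_ne_zero hw hu₂), fun s t => ?_⟩
        rw [hfact', hfact, h1a, h1b, h2a, h2b, hwa, hwb, h2a, h2b]
        field_simp
    · exact ⟨u₁ * u₂, mul_ne_zero hu₁ hu₂, fun s t => by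
        rw [hfact', hfact, h1a, h1b, h2a, h2b]; ring⟩
  · rcases divides_factor d e f g f' g' hde hfg hfg' hr2 with ⟨u₂, hu₂, h2a, h2b⟩ | ⟨u₂, hu₂, h2a, h2b⟩
    · exact ⟨u₁ * u₂, mul_ne_zero hu₁ hu₂, fun s t => by
        rw [hfact', hfact, h1a, h1b, h2a, h2b]; ring⟩
    · -- q' = u₁u₂ (fs+gt)^2; show (d,e) ∝ (f,g) using hr3
      rcases divides_factor d' e' f' g' d e hde' hfg' hde hr3 with ⟨w, hw, hwa, hwb⟩ | ⟨w, hw, hwa, hwb⟩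
      · refine ⟨u₁ * u₂ / (w * u₁), by
          apply div_ne_zero (mul_ne_zero hu₁ hu₂) (mul_ne_zero hw hu₁), fun s t => ?_⟩
        rw [hfact', hfact, h1a, h1b, h2a, h2b, hwa, hwb, h1a, h1b]
        field_simp
      · refine ⟨u₁ * u₂ / (w * u₂), by
          apply div_ne_zero (mul_ne_zero hu₁ hu₂) (mul_ne_zero hw hu₂), fun s t => ?_⟩
        rw [hfact', hfact, h1a, h1b, h2a, h2b, hwa, hwb, h2a, h2b]
        field_simp

/-- A nonvanishing point of a binary quadratic extends to a "basis" of nonvanishing points. -/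
lemma nb (A B C s₀ t₀ : ℂ) (h : A * s₀ ^ 2 + B * s₀ * t₀ + C * t₀ ^ 2 ≠ 0) :
    ∃ s₁ t₁ : ℂ, (A * s₁ ^ 2 + B * s₁ * t₁ + C * t₁ ^ 2 ≠ 0) ∧ s₀ * t₁ - s₁ * t₀ ≠ 0 := by
  obtain ⟨ds, dt, hdet⟩ : ∃ ds dt : ℂ, s₀ * dt - ds * t₀ = 1 := by
    by_cases hs : s₀ = 0
    · have ht : t₀ ≠ 0 := by intro h0; apply h; rw [hs, h0]; ring
      exact ⟨-t₀⁻¹, 0, by field_simp [hs]; ring⟩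
    · exact ⟨0, s₀⁻¹, by field_simp; ring⟩
  have main : ∃ τ : ℂ, τ ≠ 0 ∧
      A * (s₀ + τ * ds) ^ 2 + B * (s₀ + τ * ds) * (t₀ + τ * dt) + C * (t₀ + τ * dt) ^ 2 ≠ 0 := by
    by_contra hcon
    push_neg at hcon
    have e1 := hcon 1 one_ne_zero
    have e2 := hcon 2 two_ne_zero
    have e3 := hcon 3 three_ne_zero
    apply h
    linear_combination 3 * e1 - 3 * e2 + e3
  obtain ⟨τ, hτ, hval⟩ := main
  refine ⟨s₀ + τ * ds, t₀ + τ * dt, hval, ?_⟩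
  intro h0
  apply hτ
  linear_combination h0 - τ * hdet

end Stmt19

namespace Stmt19
variable {κ : Type*}

def Dm (p q : κ) (u w : κ → ℂ) : ℂ := u p * w q - u q * w p

lemma qcore (h₀ h₁ h₂ g₀ g₁ g₂ : κ → ℂ)
    (np₀ : ∀ s t : ℂ, ∃ α β : ℂ,
      s • h₀ + t • g₀ = α • (s • h₁ + t • g₁) + β • (s • h₂ + t • g₂))
    (np₁ : ∀ s t : ℂ, ∃ α β : ℂ,
      s • h₁ + t • g₁ = α • (s • h₂ + t • g₂) + β • (s • h₀ + t • g₀))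
    (np₂ : ∀ s t : ℂ, ∃ α β : ℂ,
      s • h₂ + t • g₂ = α • (s • h₀ + t • g₀) + β • (s • h₁ + t • g₁))
    (hst : ∃ (s t : ℂ) (p q : κ), Dm p q (s • h₁ + t • g₁) (s • h₂ + t • g₂) ≠ 0) :
    ∃ γ₀ γ₁ γ₂ : ℂ, (γ₀ ≠ 0 ∨ γ₁ ≠ 0 ∨ γ₂ ≠ 0) ∧
      γ₀ • h₀ + γ₁ • h₁ + γ₂ • h₂ = 0 ∧ γ₀ • g₀ + γ₁ • g₁ + γ₂ • g₂ = 0 := by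
  obtain ⟨s₀, t₀, p, q, hpq⟩ := hst
  -- KL relations
  have kl₀ : ∀ s t : ℂ, ∃ α β : ℂ,
      Dm p q (s • h₂ + t • g₂) (s • h₀ + t • g₀) = -(α * Dm p q (s • h₁ + t • g₁) (s • h₂ + t • g₂)) ∧
      Dm p q (s • h₀ + t • g₀) (s • h₁ + t • g₁) = -(β * Dm p q (s • h₁ + t • g₁) (s • h₂ + t • g₂)) := by
    intro s t
    obtain ⟨α, β, hv⟩ := np₀ s t
    refine ⟨α, β, ?_, ?_⟩ <;>
    · rw [hv]
      simp only [Dm, Pi.add_apply, Pi.smul_apply, smul_eq_mul]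
      ring
  have kl₁ : ∀ s t : ℂ, ∃ α β : ℂ,
      Dm p q (s • h₀ + t • g₀) (s • h₁ + t • g₁) = -(α * Dm p q (s • h₂ + t • g₂) (s • h₀ + t • g₀)) ∧
      Dm p q (s • h₁ + t • g₁) (s • h₂ + t • g₂) = -(β * Dm p q (s • h₂ + t • g₂) (s • h₀ + t • g₀)) := by
    intro s t
    obtain ⟨α, β, hv⟩ := np₁ s t
    refine ⟨α, β, ?_, ?_⟩ <;>
    · rw [hv]
      simp only [Dm, Pi.add_apply, Pi.smul_apply, smul_eq_mul]
      ring
  have kl₂ : ∀ s t : ℂ, ∃ α β : ℂ,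
      Dm p q (s • h₁ + t • g₁) (s • h₂ + t • g₂) = -(α * Dm p q (s • h₀ + t • g₀) (s • h₁ + t • g₁)) ∧
      Dm p q (s • h₂ + t • g₂) (s • h₀ + t • g₀) = -(β * Dm p q (s • h₀ + t • g₀) (s • h₁ + t • g₁)) := by
    intro s t
    obtain ⟨α, β, hv⟩ := np₂ s t
    refine ⟨α, β, ?_, ?_⟩ <;>
    · rw [hv]
      simp only [Dm, Pi.add_apply, Pi.smul_apply, smul_eq_mul]
      ring
  -- the fundamental identity
  have hI : ∀ s t : ℂ,
      Dm p q (s • h₁ + t • g₁) (s • h₂ + t • g₂) • (s • h₀ + t • g₀) +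
      Dm p q (s • h₂ + t • g₂) (s • h₀ + t • g₀) • (s • h₁ + t • g₁) +
      Dm p q (s • h₀ + t • g₀) (s • h₁ + t • g₁) • (s • h₂ + t • g₂) = 0 := by
    intro s t
    obtain ⟨α, β, hv⟩ := np₀ s t
    rw [hv]
    funext r
    simp only [Dm, Pi.add_apply, Pi.smul_apply, smul_eq_mul, Pi.zero_apply]
    ring
  -- coefficient expansion
  have hcoef : ∀ (u₁ w₁ u₂ w₂ : κ → ℂ) (s t : ℂ),
      Dm p q (s • u₁ + t • w₁) (s • u₂ + t • w₂) =
        Dm p q u₁ u₂ * s ^ 2 + (Dm p q u₁ w₂ + Dm p q w₁ u₂) * s * t + Dm p q w₁ w₂ * t ^ 2 := by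
    intros u₁ w₁ u₂ w₂ s t
    simp only [Dm, Pi.add_apply, Pi.smul_apply, smul_eq_mul]
    ring
  -- zero-set equalities
  have hiff₁ : ∀ s t : ℂ, Dm p q (s • h₁ + t • g₁) (s • h₂ + t • g₂) = 0 ↔
      Dm p q (s • h₂ + t • g₂) (s • h₀ + t • g₀) = 0 := by
    intro s t
    constructor
    · intro h0
      obtain ⟨α, β, k1, k2⟩ := kl₀ s t
      rw [k1, h0]; ring
    · intro h0
      obtain ⟨α, β, k1, k2⟩ := kl₁ s t
      rw [k2, h0]; ring
  have hiff₂ : ∀ s t : ℂ, Dm p q (s • h₁ + t • g₁) (s • h₂ + t • g₂) = 0 ↔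
      Dm p q (s • h₀ + t • g₀) (s • h₁ + t • g₁) = 0 := by
    intro s t
    constructor
    · intro h0
      obtain ⟨α, β, k1, k2⟩ := kl₀ s t
      rw [k2, h0]; ring
    · intro h0
      obtain ⟨α, β, k1, k2⟩ := kl₂ s t
      rw [k1, h0]; ring
  -- apply bq for Q₁ against Q₀
  obtain ⟨u₁, hu₁ne, hu₁⟩ := bq (Dm p q h₁ h₂) (Dm p q h₁ g₂ + Dm p q g₁ h₂) (Dm p q g₁ g₂)
      (Dm p q h₂ h₀) (Dm p q h₂ g₀ + Dm p q g₂ h₀) (Dm p q g₂ g₀)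
      (fun s t => by rw [← hcoef, ← hcoef]; exact hiff₁ s t)
      ⟨s₀, t₀, by rw [← hcoef]; exact hpq⟩
  obtain ⟨u₂, hu₂ne, hu₂⟩ := bq (Dm p q h₁ h₂) (Dm p q h₁ g₂ + Dm p q g₁ h₂) (Dm p q g₁ g₂)
      (Dm p q h₀ h₁) (Dm p q h₀ g₁ + Dm p q g₀ h₁) (Dm p q g₀ g₁)
      (fun s t => by rw [← hcoef, ← hcoef]; exact hiff₂ s t)
      ⟨s₀, t₀, by rw [← hcoef]; exact hpq⟩
  have hu₁' : ∀ s t : ℂ, Dm p q (s • h₂ + t • g₂) (s • h₀ + t • g₀) =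
      u₁ * Dm p q (s • h₁ + t • g₁) (s • h₂ + t • g₂) := by
    intro s t; rw [hcoef, hcoef]; exact hu₁ s t
  have hu₂' : ∀ s t : ℂ, Dm p q (s • h₀ + t • g₀) (s • h₁ + t • g₁) =
      u₂ * Dm p q (s • h₁ + t • g₁) (s • h₂ + t • g₂) := by
    intro s t; rw [hcoef, hcoef]; exact hu₂ s t
  -- from the identity: vanishing of the fixed combination wherever Q₀ ≠ 0
  have hW : ∀ s t : ℂ, Dm p q (s • h₁ + t • g₁) (s • h₂ + t • g₂) ≠ 0 →
      s • (h₀ + u₁ • h₁ + u₂ • h₂) + t • (g₀ + u₁ • g₁ + u₂ • g₂) = 0 := by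
    intro s t hQ
    have hI' := hI s t
    rw [hu₁' s t, hu₂' s t] at hI'
    have hfac : Dm p q (s • h₁ + t • g₁) (s • h₂ + t • g₂) •
        (s • (h₀ + u₁ • h₁ + u₂ • h₂) + t • (g₀ + u₁ • g₁ + u₂ • g₂)) = 0 := by
      funext r
      have hr := congrFun hI' r
      simp only [Pi.add_apply, Pi.smul_apply, smul_eq_mul, Pi.zero_apply] at hr ⊢
      linear_combination hr
    exact (smul_eq_zero.mp hfac).resolve_left hQ
  -- a second nonvanishing point, transversal to the first
  obtain ⟨s₁, t₁, hval₁, hdet⟩ := nb (Dm p q h₁ h₂) (Dm p q h₁ g₂ + Dm p q g₁ h₂)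
      (Dm p q g₁ g₂) s₀ t₀ (by rw [← hcoef]; exact hpq)
  have hval₁' : Dm p q (s₁ • h₁ + t₁ • g₁) (s₁ • h₂ + t₁ • g₂) ≠ 0 := by
    rw [hcoef]; exact hval₁
  have W0 := hW s₀ t₀ hpq
  have W1 := hW s₁ t₁ hval₁'
  have hH : h₀ + u₁ • h₁ + u₂ • h₂ = 0 := by
    funext r
    have w0 := congrFun W0 r
    have w1 := congrFun W1 r
    simp only [Pi.add_apply, Pi.smul_apply, smul_eq_mul, Pi.zero_apply] at w0 w1 ⊢
    have hz : (s₀ * t₁ - s₁ * t₀) *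
        (h₀ r + u₁ * h₁ r + u₂ * h₂ r) = 0 := by
      linear_combination t₁ * w0 - t₀ * w1
    exact (mul_eq_zero.mp hz).resolve_left hdet
  have hG : g₀ + u₁ • g₁ + u₂ • g₂ = 0 := by
    funext r
    have w0 := congrFun W0 r
    have w1 := congrFun W1 r
    simp only [Pi.add_apply, Pi.smul_apply, smul_eq_mul, Pi.zero_apply] at w0 w1 ⊢
    have hz : (s₀ * t₁ - s₁ * t₀) *
        (g₀ r + u₁ * g₁ r + u₂ * g₂ r) = 0 := by
      linear_combination s₀ * w1 - s₁ * w0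
    exact (mul_eq_zero.mp hz).resolve_left hdet
  refine ⟨1, u₁, u₂, Or.inl one_ne_zero, ?_, ?_⟩
  · rw [one_smul]; exact hH
  · rw [one_smul]; exact hG

end Stmt19

namespace Stmt19
variable {κ : Type*} {V : Type*} [AddCommGroup V] [Module ℂ V]

def pmap (h g : κ → ℂ) : (ℂ × ℂ) →ₗ[ℂ] (κ → ℂ) where
  toFun c := c.1 • h + c.2 • g
  map_add' x y := by
    funext p
    simp only [Pi.add_apply, Pi.smul_apply, smul_eq_mul, Prod.fst_add, Prod.snd_add]
    ring
  map_smul' c x := by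
    funext p
    simp only [Pi.add_apply, Pi.smul_apply, smul_eq_mul, Prod.smul_fst, Prod.smul_snd,
      RingHom.id_apply]
    ring

@[simp] lemma pmap_apply (h g : κ → ℂ) (c : ℂ × ℂ) : pmap h g c = c.1 • h + c.2 • g := rfl

lemma not_dep_minor {u w : κ → ℂ} (h : ¬ Dep u w) : ∃ p q, Dm p q u w ≠ 0 := by
  by_contra hcon
  push_neg at hcon
  apply h
  apply dep_of_minors
  intro p q
  have := hcon p q
  unfold Dm at this
  linear_combination this

lemma pencil (h₀ h₁ h₂ g₀ g₁ g₂ : κ → ℂ)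
    (np₀ : ∀ s t : ℂ, ∃ α β : ℂ,
      s • h₀ + t • g₀ = α • (s • h₁ + t • g₁) + β • (s • h₂ + t • g₂))
    (np₁ : ∀ s t : ℂ, ∃ α β : ℂ,
      s • h₁ + t • g₁ = α • (s • h₂ + t • g₂) + β • (s • h₀ + t • g₀))
    (np₂ : ∀ s t : ℂ, ∃ α β : ℂ,
      s • h₂ + t • g₂ = α • (s • h₀ + t • g₀) + β • (s • h₁ + t • g₁)) :
    ∃ γ₀ γ₁ γ₂ : ℂ, (γ₀ ≠ 0 ∨ γ₁ ≠ 0 ∨ γ₂ ≠ 0) ∧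
      γ₀ • h₀ + γ₁ • h₁ + γ₂ • h₂ = 0 ∧ γ₀ • g₀ + γ₁ • g₁ + γ₂ • g₂ = 0 := by
  by_cases hr : ∃ s t : ℂ,
      ¬ Dep (s • h₀ + t • g₀) (s • h₁ + t • g₁) ∨
      ¬ Dep (s • h₀ + t • g₀) (s • h₂ + t • g₂) ∨
      ¬ Dep (s • h₁ + t • g₁) (s • h₂ + t • g₂)
  · obtain ⟨s, t, hcase⟩ := hr
    rcases hcase with hc | hc | hc
    · obtain ⟨pp, qq, hm⟩ := not_dep_minor hc
      obtain ⟨γ₀', γ₁', γ₂', hne, hh, hg⟩ := qcore h₂ h₀ h₁ g₂ g₀ g₁ np₂ np₀ np₁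
        ⟨s, t, pp, qq, hm⟩
      refine ⟨γ₁', γ₂', γ₀', ?_, ?_, ?_⟩
      · rcases hne with h | h | h
        · exact Or.inr (Or.inr h)
        · exact Or.inl h
        · exact Or.inr (Or.inl h)
      · funext r
        have := congrFun hh r
        simp only [Pi.add_apply, Pi.smul_apply, smul_eq_mul, Pi.zero_apply] at this ⊢
        linear_combination this
      · funext r
        have := congrFun hg r
        simp only [Pi.add_apply, Pi.smul_apply, smul_eq_mul, Pi.zero_apply] at this ⊢
        linear_combination this
    · obtain ⟨pp, qq, hm⟩ := not_dep_minor hc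
      have hm' : Dm pp qq (s • h₂ + t • g₂) (s • h₀ + t • g₀) ≠ 0 := by
        intro h0; apply hm; unfold Dm at h0 ⊢; linear_combination -h0
      obtain ⟨γ₀', γ₁', γ₂', hne, hh, hg⟩ := qcore h₁ h₂ h₀ g₁ g₂ g₀ np₁ np₂ np₀
        ⟨s, t, pp, qq, hm'⟩
      refine ⟨γ₂', γ₀', γ₁', ?_, ?_, ?_⟩
      · rcases hne with h | h | h
        · exact Or.inr (Or.inl h)
        · exact Or.inr (Or.inr h)
        · exact Or.inl h
      · funext r
        have := congrFun hh r
        simp only [Pi.add_apply, Pi.smul_apply, smul_eq_mul, Pi.zero_apply] at this ⊢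
        linear_combination this
      · funext r
        have := congrFun hg r
        simp only [Pi.add_apply, Pi.smul_apply, smul_eq_mul, Pi.zero_apply] at this ⊢
        linear_combination this
    · obtain ⟨pp, qq, hm⟩ := not_dep_minor hc
      exact qcore h₀ h₁ h₂ g₀ g₁ g₂ np₀ np₁ np₂ ⟨s, t, pp, qq, hm⟩
  · push_neg at hr
    obtain ⟨γ₀, γ₁, γ₂, hne, hrel⟩ := calpha (pmap h₀ g₀) (pmap h₁ g₁) (pmap h₂ g₂)
      (fun a => np₀ a.1 a.2)
      (fun a => (hr a.1 a.2).1) (fun a => (hr a.1 a.2).2.1) (fun a => (hr a.1 a.2).2.2)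
    refine ⟨γ₀, γ₁, γ₂, hne, ?_, ?_⟩
    · have := hrel (1, 0)
      simpa using this
    · have := hrel (0, 1)
      simpa using this

/-- Key auxiliary: a rank-2 point forces a global linear relation. -/
lemma claimC_aux (S₀ S₁ S₂ : V →ₗ[ℂ] (κ → ℂ))
    (np₀ : ∀ a, ∃ α β : ℂ, S₀ a = α • S₁ a + β • S₂ a)
    (np₁ : ∀ a, ∃ α β : ℂ, S₁ a = α • S₂ a + β • S₀ a)
    (np₂ : ∀ a, ∃ α β : ℂ, S₂ a = α • S₀ a + β • S₁ a)
    (a₀ : V) (h01 : ¬ Dep (S₀ a₀) (S₁ a₀)) :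
    ∃ γ₀ γ₁ γ₂ : ℂ, (γ₀ ≠ 0 ∨ γ₁ ≠ 0 ∨ γ₂ ≠ 0) ∧
      ∀ a, γ₀ • S₀ a + γ₁ • S₁ a + γ₂ • S₂ a = 0 := by
  obtain ⟨α, β, hαβ⟩ := np₂ a₀
  refine ⟨-α, -β, 1, Or.inr (Or.inr one_ne_zero), fun b => ?_⟩
  have pnp₀ : ∀ s t : ℂ, ∃ α' β' : ℂ, s • (S₀ a₀) + t • (S₀ b) =
      α' • (s • (S₁ a₀) + t • (S₁ b)) + β' • (s • (S₂ a₀) + t • (S₂ b)) := by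
    intro s t
    obtain ⟨α', β', h⟩ := np₀ (s • a₀ + t • b)
    exact ⟨α', β', by simpa only [map_add, map_smul] using h⟩
  have pnp₁ : ∀ s t : ℂ, ∃ α' β' : ℂ, s • (S₁ a₀) + t • (S₁ b) =
      α' • (s • (S₂ a₀) + t • (S₂ b)) + β' • (s • (S₀ a₀) + t • (S₀ b)) := by
    intro s t
    obtain ⟨α', β', h⟩ := np₁ (s • a₀ + t • b)
    exact ⟨α', β', by simpa only [map_add, map_smul] using h⟩
  have pnp₂ : ∀ s t : ℂ, ∃ α' β' : ℂ, s • (S₂ a₀) + t • (S₂ b) =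
      α' • (s • (S₀ a₀) + t • (S₀ b)) + β' • (s • (S₁ a₀) + t • (S₁ b)) := by
    intro s t
    obtain ⟨α', β', h⟩ := np₂ (s • a₀ + t • b)
    exact ⟨α', β', by simpa only [map_add, map_smul] using h⟩
  obtain ⟨δ₀, δ₁, δ₂, hδ, hha, hgb⟩ :=
    pencil (S₀ a₀) (S₁ a₀) (S₂ a₀) (S₀ b) (S₁ b) (S₂ b) pnp₀ pnp₁ pnp₂
  have hco : (δ₀ + δ₂ * α) • S₀ a₀ + (δ₁ + δ₂ * β) • S₁ a₀ = 0 := by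
    rw [hαβ] at hha
    funext r
    have := congrFun hha r
    simp only [Pi.add_apply, Pi.smul_apply, smul_eq_mul, Pi.zero_apply] at this ⊢
    linear_combination this
  obtain ⟨e₀, e₁⟩ := not_dep_coeffs h01 hco
  have hδ₂ : δ₂ ≠ 0 := by
    intro h0
    rw [h0, zero_mul, add_zero] at e₀ e₁
    rcases hδ with h | h | h
    · exact h e₀
    · exact h e₁
    · exact h h0
  have hfac : δ₂ • ((-α) • S₀ b + (-β) • S₁ b + (1 : ℂ) • S₂ b) = 0 := by
    funext r
    have hgr := congrFun hgb r
    simp only [Pi.add_apply, Pi.smul_apply, smul_eq_mul, Pi.zero_apply] at hgr ⊢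
    linear_combination hgr - S₀ b r * e₀ - S₁ b r * e₁
  exact (smul_eq_zero.mp hfac).resolve_left hδ₂

/-- Claim C: no pivot anywhere forces a global linear relation. -/
lemma claimC (S₀ S₁ S₂ : V →ₗ[ℂ] (κ → ℂ))
    (np₀ : ∀ a, ∃ α β : ℂ, S₀ a = α • S₁ a + β • S₂ a)
    (np₁ : ∀ a, ∃ α β : ℂ, S₁ a = α • S₂ a + β • S₀ a)
    (np₂ : ∀ a, ∃ α β : ℂ, S₂ a = α • S₀ a + β • S₁ a) :
    ∃ γ₀ γ₁ γ₂ : ℂ, (γ₀ ≠ 0 ∨ γ₁ ≠ 0 ∨ γ₂ ≠ 0) ∧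
      ∀ a, γ₀ • S₀ a + γ₁ • S₁ a + γ₂ • S₂ a = 0 := by
  by_cases hr : ∃ a₀, ¬ Dep (S₀ a₀) (S₁ a₀) ∨ ¬ Dep (S₀ a₀) (S₂ a₀) ∨ ¬ Dep (S₁ a₀) (S₂ a₀)
  · obtain ⟨a₀, hc⟩ := hr
    rcases hc with hc | hc | hc
    · exact claimC_aux S₀ S₁ S₂ np₀ np₁ np₂ a₀ hc
    · obtain ⟨γ₀', γ₁', γ₂', hne, hrel⟩ :=
        claimC_aux S₂ S₀ S₁ np₂ np₀ np₁ a₀ (not_dep_symm hc)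
      refine ⟨γ₁', γ₂', γ₀', ?_, fun a => ?_⟩
      · rcases hne with h | h | h
        · exact Or.inr (Or.inr h)
        · exact Or.inl h
        · exact Or.inr (Or.inl h)
      · funext r
        have := congrFun (hrel a) r
        simp only [Pi.add_apply, Pi.smul_apply, smul_eq_mul, Pi.zero_apply] at this ⊢
        linear_combination this
    · obtain ⟨γ₀', γ₁', γ₂', hne, hrel⟩ :=
        claimC_aux S₁ S₂ S₀ np₁ np₂ np₀ a₀ hc
      refine ⟨γ₂', γ₀', γ₁', ?_, fun a => ?_⟩
      · rcases hne with h | h | h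
        · exact Or.inr (Or.inl h)
        · exact Or.inr (Or.inr h)
        · exact Or.inl h
      · funext r
        have := congrFun (hrel a) r
        simp only [Pi.add_apply, Pi.smul_apply, smul_eq_mul, Pi.zero_apply] at this ⊢
        linear_combination this
  · push_neg at hr
    exact calpha S₀ S₁ S₂ np₀ (fun a => (hr a).1) (fun a => (hr a).2.1) (fun a => (hr a).2.2)

end Stmt19

namespace Stmt19

universe u

variable {n : ℕ}

/-- Multilinear evaluation of a tensor against a product vector. -/
noncomputable def mulEval {ι : Fin n → Type u} [∀ j, Fintype (ι j)]
    (T : (∀ j, ι j) → ℂ) (b : ∀ j, ι j → ℂ) : ℂ :=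
  ∑ f : ∀ j, ι j, T f * ∏ j, b j (f j)

/-- Contraction of a tensor with a vector in the first slot. -/
noncomputable def ctr {ι : Fin (n + 1) → Type u} [∀ j, Fintype (ι j)]
    (T : (∀ j, ι j) → ℂ) (a : ι 0 → ℂ) : (∀ j : Fin n, ι j.succ) → ℂ :=
  fun f' => ∑ k : ι 0, T (Fin.cons k f') * a k

lemma mulEval_cons {ι : Fin (n + 1) → Type u} [∀ j, Fintype (ι j)]
    (T : (∀ j, ι j) → ℂ) (a : ι 0 → ℂ) (b : ∀ j : Fin n, ι j.succ → ℂ) :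
    mulEval T (Fin.cons (α := fun j => ι j → ℂ) a b) = mulEval (ctr T a) b := by
  classical
  unfold mulEval ctr
  rw [← Equiv.sum_comp (Fin.consEquiv ι)
    (fun f => T f * ∏ j, Fin.cons (α := fun j => ι j → ℂ) a b j (f j))]
  rw [Fintype.sum_prod_type]
  rw [Finset.sum_comm]
  refine Finset.sum_congr rfl fun f' _ => ?_
  rw [Finset.sum_mul]
  refine Finset.sum_congr rfl fun k _ => ?_
  have he : (Fin.consEquiv ι) (k, f') = Fin.cons k f' := rfl
  rw [he, Fin.prod_univ_succ]
  simp only [Fin.cons_zero, Fin.cons_succ]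
  ring

lemma ctr_single {ι : Fin (n + 1) → Type u} [∀ j, Fintype (ι j)] [DecidableEq (ι 0)]
    (T : (∀ j, ι j) → ℂ) (k : ι 0) :
    ctr T (Pi.single k 1) = fun f' => T (Fin.cons k f') := by
  funext f'
  unfold ctr
  rw [Finset.sum_eq_single k]
  · simp
  · intro k' _ hk'
    simp [Pi.single_apply, hk']
  · intro h; exact absurd (Finset.mem_univ k) h

/-- The contraction, bundled as a linear map in the contracted vector. -/
noncomputable def ctrL {ι : Fin (n + 1) → Type u} [∀ j, Fintype (ι j)]
    (T : (∀ j, ι j) → ℂ) : (ι 0 → ℂ) →ₗ[ℂ] ((∀ j : Fin n, ι j.succ) → ℂ) where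
  toFun := ctr T
  map_add' x y := by
    funext f'
    simp only [ctr, Pi.add_apply, mul_add, Finset.sum_add_distrib]
  map_smul' c x := by
    funext f'
    simp only [ctr, Pi.smul_apply, smul_eq_mul, RingHom.id_apply, Finset.mul_sum]
    refine Finset.sum_congr rfl fun k _ => ?_
    ring

@[simp] lemma ctrL_apply {ι : Fin (n + 1) → Type u} [∀ j, Fintype (ι j)]
    (T : (∀ j, ι j) → ℂ) (a : ι 0 → ℂ) : ctrL T a = ctr T a := rfl

lemma ctr_smulT {ι : Fin (n + 1) → Type u} [∀ j, Fintype (ι j)]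
    (T : (∀ j, ι j) → ℂ) (c : ℂ) (a : ι 0 → ℂ) :
    ctr (c • T) a = c • ctr T a := by
  funext f'
  simp only [ctr, Pi.smul_apply, smul_eq_mul, Finset.mul_sum]
  refine Finset.sum_congr rfl fun k _ => ?_
  ring

lemma ctr_eq_imp {ι : Fin (n + 1) → Type u} [∀ j, Fintype (ι j)]
    {u w : (∀ j, ι j) → ℂ} (h : ∀ a, ctr u a = ctr w a) : u = w := by
  classical
  funext gpt
  have h1 := congrFun (h (Pi.single (gpt 0) 1)) (Fin.tail gpt)
  rw [ctr_single, ctr_single] at h1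
  simpa [Fin.cons_self_tail] using h1

lemma mulEval_smulT {ι : Fin n → Type u} [∀ j, Fintype (ι j)]
    (T : (∀ j, ι j) → ℂ) (c : ℂ) (b : ∀ j, ι j → ℂ) :
    mulEval (c • T) b = c * mulEval T b := by
  simp only [mulEval, Pi.smul_apply, smul_eq_mul, Finset.mul_sum]
  refine Finset.sum_congr rfl fun f _ => ?_
  ring

lemma mulEval_zeroT {ι : Fin n → Type u} [∀ j, Fintype (ι j)]
    (b : ∀ j, ι j → ℂ) : mulEval (0 : (∀ j, ι j) → ℂ) b = 0 := by
  simp [mulEval]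

end Stmt19

namespace Stmt19
universe u

theorem twoState : ∀ (n : ℕ) (ι : Fin n → Type u) [∀ j, Fintype (ι j)]
    (u w : (∀ j, ι j) → ℂ), (∀ c : ℂ, w ≠ c • u) →
    ∃ b : ∀ j, ι j → ℂ, mulEval u b = 0 ∧ mulEval w b ≠ 0 := by
  intro n
  induction n with
  | zero =>
    intro ι inst u w hw
    have hU : Unique (∀ j : Fin 0, ι j) :=
      ⟨⟨fun j => j.elim0⟩, fun f => funext fun j => j.elim0⟩
    set p : ∀ j : Fin 0, ι j := hU.default with hp
    have hconst : ∀ (v : (∀ j : Fin 0, ι j) → ℂ) q, v q = v p := fun v q => by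
      rw [Subsingleton.elim (α := ∀ j : Fin 0, ι j) q p]
    have hme : ∀ (v : (∀ j : Fin 0, ι j) → ℂ) (b : ∀ j : Fin 0, ι j → ℂ),
        mulEval v b = v p := by
      intro v b
      unfold mulEval
      have : (Finset.univ : Finset (∀ j : Fin 0, ι j)) = {p} := by
        apply Finset.eq_singleton_iff_unique_mem.mpr
        exact ⟨Finset.mem_univ p, fun x _ => Subsingleton.elim x p⟩
      rw [this, Finset.sum_singleton]
      simp
    by_cases hup : u p = 0
    · have hwp : w p ≠ 0 := by
        intro h0
        apply hw 0
        funext q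
        rw [hconst w q, h0]
        simp
      exact ⟨fun j => j.elim0, by rw [hme]; exact hup, by rw [hme]; exact hwp⟩
    · exfalso
      apply hw (w p / u p)
      funext q
      rw [hconst w q]
      have : (w p / u p) • u q = (w p / u p) * u p := by
        rw [smul_eq_mul, hconst u q]
      rw [Pi.smul_apply, this]
      field_simp
  | succ n IH =>
    intro ι inst u w hw
    classical
    by_cases hx : ∃ a : ι 0 → ℂ, ∀ c : ℂ, ctr w a ≠ c • ctr u a
    · obtain ⟨a, ha⟩ := hx
      obtain ⟨b, hb1, hb2⟩ := IH (fun j => ι j.succ) (ctr u a) (ctr w a) ha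
      exact ⟨Fin.cons (α := fun j => ι j → ℂ) a b,
        by rw [mulEval_cons]; exact hb1, by rw [mulEval_cons]; exact hb2⟩
    · push_neg at hx
      exfalso
      by_cases h2 : ∃ x y, ¬ Dep (ctr u x) (ctr u y)
      · obtain ⟨x, y, hxy⟩ := h2
        have hdep : ∀ a, Dep (ctrL u a) (ctrL w a) := by
          intro a
          obtain ⟨c, hc⟩ := hx a
          refine ⟨c, -1, Or.inr (neg_ne_zero.mpr one_ne_zero), ?_⟩
          rw [ctrL_apply, ctrL_apply, hc]
          funext r
          simp only [Pi.add_apply, Pi.smul_apply, smul_eq_mul, Pi.zero_apply]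
          ring
        obtain ⟨c, hc⟩ := L2 (ctrL u) (ctrL w) hdep x y hxy
        apply hw c
        apply ctr_eq_imp
        intro a
        rw [ctr_smulT]
        exact hc a
      · push_neg at h2
        by_cases hu : ∃ a₀, ctr u a₀ ≠ 0
        · obtain ⟨a₀, ha₀⟩ := hu
          obtain ⟨p₀, hp₀⟩ : ∃ p, ctr u a₀ p ≠ 0 := by
            have := Function.ne_iff.mp ha₀; simpa using this
          obtain ⟨f, hf⟩ := scalarize (ctrL u) (ctr u a₀) p₀ hp₀
            (fun x => (h2 a₀ x).resolve ha₀)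
          obtain ⟨g, hg⟩ := scalarize (ctrL w) (ctr u a₀) p₀ hp₀ (by
            intro x
            obtain ⟨c, hc⟩ := hx x
            obtain ⟨c', hc'⟩ := (h2 a₀ x).resolve ha₀
            exact ⟨c * c', by
              rw [ctrL_apply, hc, hc', smul_smul]⟩)
          have hker : ∀ x, f x = 0 → g x = 0 := by
            intro x h0
            obtain ⟨c, hc⟩ := hx x
            have hux : ctr u x = 0 := by
              have := hf x
              rw [ctrL_apply] at this
              rw [this, h0, zero_smul]
            have hwx : ctr w x = 0 := by rw [hc, hux, smul_zero]
            have := hg x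
            rw [ctrL_apply, hwx] at this
            have := this.symm
            rcases smul_eq_zero.mp this with h | h
            · exact h
            · exact absurd h ha₀
          obtain ⟨c, hc⟩ := fk f g hker
          apply hw c
          apply ctr_eq_imp
          intro x
          have h1 : ctr w x = g x • ctr u a₀ := by rw [← ctrL_apply, hg x]
          have h2' : ctr u x = f x • ctr u a₀ := by rw [← ctrL_apply, hf x]
          rw [ctr_smulT, h1, h2', hc x, mul_smul]
        · push_neg at hu
          apply hw 0
          apply ctr_eq_imp
          intro a
          obtain ⟨c, hc⟩ := hx a
          rw [hc, hu a, ctr_smulT, hu a]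
          simp

end Stmt19

namespace Stmt19
universe u

lemma fin3_ne : ∀ i x : Fin 3, i ≠ x → i = x + 1 ∨ i = x + 2 := by decide

lemma sum3 {M : Type*} [AddCommMonoid M] (x : Fin 3) (F : Fin 3 → M) :
    ∑ i, F i = F x + F (x + 1) + F (x + 2) := by
  have hx : x = 0 ∨ x = 1 ∨ x = 2 := by omega
  rcases hx with rfl | rfl | rfl <;> rw [Fin.sum_univ_three]
  · have e1 : (0 + 1 : Fin 3) = 1 := rfl
    have e2 : (0 + 2 : Fin 3) = 2 := rfl
    rw [e1, e2]
  · have e1 : (1 + 1 : Fin 3) = 2 := rfl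
    have e2 : (1 + 2 : Fin 3) = 0 := rfl
    rw [e1, e2]; abel
  · have e1 : (2 + 1 : Fin 3) = 0 := rfl
    have e2 : (2 + 2 : Fin 3) = 1 := rfl
    rw [e1, e2]; abel

lemma ctr_addT {n : ℕ} {ι : Fin (n + 1) → Type u} [∀ j, Fintype (ι j)]
    (T S : (∀ j, ι j) → ℂ) (a : ι 0 → ℂ) :
    ctr (T + S) a = ctr T a + ctr S a := by
  funext f'
  simp only [ctr, Pi.add_apply, add_mul, Finset.sum_add_distrib]

lemma ctr_zeroT {n : ℕ} {ι : Fin (n + 1) → Type u} [∀ j, Fintype (ι j)]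
    (a : ι 0 → ℂ) : ctr (0 : (∀ j, ι j) → ℂ) a = 0 := by
  funext f'
  simp [ctr]

theorem core : ∀ (n : ℕ) (ι : Fin n → Type u) [∀ j, Fintype (ι j)]
    (T : Fin 3 → ((∀ j, ι j) → ℂ)), LinearIndependent ℂ T →
    ∃ (x : Fin 3) (b : ∀ j, ι j → ℂ),
      (∀ i, i ≠ x → mulEval (T i) b = 0) ∧ mulEval (T x) b ≠ 0 := by
  intro n
  induction n with
  | zero =>
    intro ι inst T hT
    exfalso
    haveI hU : Unique (∀ j : Fin 0, ι j) :=
      ⟨⟨fun j => j.elim0⟩, fun f => funext fun j => j.elim0⟩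
    set p : ∀ j : Fin 0, ι j := hU.default with hp
    have h0 : T 0 ≠ 0 := hT.ne_zero 0
    have hli := Fintype.linearIndependent_iff.mp hT
    have hcomb := hli ![T 1 p, -(T 0 p), 0] ?_
    · have h1 := hcomb 1
      simp only [Matrix.cons_val_one, Matrix.cons_val_zero, Matrix.head_cons, neg_eq_zero] at h1
      apply h0
      funext q
      rw [Subsingleton.elim q p]
      exact h1
    · rw [Fin.sum_univ_three]
      funext q
      rw [Subsingleton.elim q p]
      simp only [Matrix.cons_val_zero, Matrix.cons_val_one, Matrix.head_cons,
        Matrix.cons_val_two, Matrix.tail_cons, Pi.add_apply, Pi.smul_apply,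
        smul_eq_mul, Pi.zero_apply]
      ring
  | succ n IH =>
    intro ι inst T hT
    classical
    by_cases hA : ∃ a, LinearIndependent ℂ (fun i => ctr (T i) a)
    · obtain ⟨a, ha⟩ := hA
      obtain ⟨x, b, h1, h2⟩ := IH (fun j => ι j.succ) (fun i => ctr (T i) a) ha
      exact ⟨x, Fin.cons (α := fun j => ι j → ℂ) a b,
        fun i hi => by rw [mulEval_cons]; exact h1 i hi,
        by rw [mulEval_cons]; exact h2⟩
    · push_neg at hA
      by_cases hP : ∃ (a : ι 0 → ℂ) (x : Fin 3), ∀ α β : ℂ,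
          ctr (T x) a ≠ α • ctr (T (x + 1)) a + β • ctr (T (x + 2)) a
      · obtain ⟨a, x, hx⟩ := hP
        have hdep : Dep (ctr (T (x + 1)) a) (ctr (T (x + 2)) a) := by
          by_contra hnd
          obtain ⟨g, hsum, i₀, hi₀⟩ := Fintype.not_linearIndependent_iff.mp (hA a)
          rw [sum3 x] at hsum
          by_cases hgx : g x = 0
          · apply hnd
            refine ⟨g (x + 1), g (x + 2), ?_, ?_⟩
            · have hne : i₀ ≠ x := fun h => hi₀ (h ▸ hgx)
              rcases fin3_ne i₀ x hne with h | h
              · exact Or.inl (h ▸ hi₀)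
              · exact Or.inr (h ▸ hi₀)
            · rw [hgx, zero_smul, zero_add] at hsum
              exact hsum
          · apply hx (-(g (x + 1)) / g x) (-(g (x + 2)) / g x)
            funext r
            have hr := congrFun hsum r
            simp only [Pi.add_apply, Pi.smul_apply, smul_eq_mul, Pi.zero_apply] at hr ⊢
            field_simp
            linear_combination hr
        by_cases hv₁ : ctr (T (x + 1)) a = 0
        · by_cases hv₂ : ctr (T (x + 2)) a = 0
          · have hwne : ∀ c : ℂ, ctr (T x) a ≠ c • (0 : (∀ j : Fin n, ι j.succ) → ℂ) := by
              intro c hcc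
              apply hx 0 0
              rw [hcc, hv₁, hv₂]
              funext r; simp
            obtain ⟨b, hb1, hb2⟩ := twoState n (fun j => ι j.succ) 0 (ctr (T x) a) hwne
            refine ⟨x, Fin.cons (α := fun j => ι j → ℂ) a b, fun i hi => ?_,
              by rw [mulEval_cons]; exact hb2⟩
            rcases fin3_ne i x hi with h | h <;> subst h <;> rw [mulEval_cons]
            · rw [hv₁]; exact mulEval_zeroT b
            · rw [hv₂]; exact mulEval_zeroT b
          · have hwne : ∀ c : ℂ, ctr (T x) a ≠ c • ctr (T (x + 2)) a := by
              intro c hcc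
              apply hx 0 c
              rw [hcc, hv₁]
              funext r; simp
            obtain ⟨b, hb1, hb2⟩ := twoState n (fun j => ι j.succ)
              (ctr (T (x + 2)) a) (ctr (T x) a) hwne
            refine ⟨x, Fin.cons (α := fun j => ι j → ℂ) a b, fun i hi => ?_,
              by rw [mulEval_cons]; exact hb2⟩
            rcases fin3_ne i x hi with h | h <;> subst h <;> rw [mulEval_cons]
            · rw [hv₁]; exact mulEval_zeroT b
            · exact hb1
        · obtain ⟨d, hd⟩ := hdep.resolve hv₁
          have hwne : ∀ c : ℂ, ctr (T x) a ≠ c • ctr (T (x + 1)) a := by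
            intro c hcc
            apply hx c 0
            rw [hcc]
            funext r; simp
          obtain ⟨b, hb1, hb2⟩ := twoState n (fun j => ι j.succ)
            (ctr (T (x + 1)) a) (ctr (T x) a) hwne
          refine ⟨x, Fin.cons (α := fun j => ι j → ℂ) a b, fun i hi => ?_,
            by rw [mulEval_cons]; exact hb2⟩
          rcases fin3_ne i x hi with h | h <;> subst h <;> rw [mulEval_cons]
          · exact hb1
          · rw [hd]
            rw [show (d • ctr (T (x + 1)) a) = d • ctr (T (x+1)) a from rfl]
            calc mulEval (d • ctr (T (x + 1)) a) b = d * mulEval (ctr (T (x + 1)) a) b :=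
                  mulEval_smulT _ d b
              _ = 0 := by rw [hb1, mul_zero]
      · push_neg at hP
        exfalso
        have np₀ : ∀ a, ∃ α β : ℂ, ctrL (T 0) a = α • ctrL (T 1) a + β • ctrL (T 2) a := by
          intro a
          obtain ⟨α, β, h⟩ := hP a 0
          refine ⟨α, β, ?_⟩
          have e1 : (0 + 1 : Fin 3) = 1 := rfl
          have e2 : (0 + 2 : Fin 3) = 2 := rfl
          rw [ctrL_apply, ctrL_apply, ctrL_apply, ← e1, ← e2]
          exact h
        have np₁ : ∀ a, ∃ α β : ℂ, ctrL (T 1) a = α • ctrL (T 2) a + β • ctrL (T 0) a := by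
          intro a
          obtain ⟨α, β, h⟩ := hP a 1
          refine ⟨α, β, ?_⟩
          have e1 : (1 + 1 : Fin 3) = 2 := rfl
          have e2 : (1 + 2 : Fin 3) = 0 := rfl
          rw [ctrL_apply, ctrL_apply, ctrL_apply, ← e1, ← e2]
          exact h
        have np₂ : ∀ a, ∃ α β : ℂ, ctrL (T 2) a = α • ctrL (T 0) a + β • ctrL (T 1) a := by
          intro a
          obtain ⟨α, β, h⟩ := hP a 2
          refine ⟨α, β, ?_⟩
          have e1 : (2 + 1 : Fin 3) = 0 := rfl
          have e2 : (2 + 2 : Fin 3) = 1 := rfl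
          rw [ctrL_apply, ctrL_apply, ctrL_apply, ← e1, ← e2]
          exact h
        obtain ⟨γ₀, γ₁, γ₂, hγ, hrel⟩ := claimC (ctrL (T 0)) (ctrL (T 1)) (ctrL (T 2))
          np₀ np₁ np₂
        have hzero : γ₀ • T 0 + γ₁ • T 1 + γ₂ • T 2 = 0 := by
          apply ctr_eq_imp (w := (0 : (∀ j, ι j) → ℂ))
          intro a
          rw [ctr_addT, ctr_addT, ctr_smulT, ctr_smulT, ctr_smulT, ctr_zeroT]
          exact hrel a
        have hcoe := Fintype.linearIndependent_iff.mp hT ![γ₀, γ₁, γ₂] ?_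
        · rcases hγ with h | h | h
          · exact h (by simpa using hcoe 0)
          · exact h (by simpa using hcoe 1)
          · exact h (by simpa using hcoe 2)
        · rw [Fin.sum_univ_three]
          simpa using hzero

end Stmt19

theorem stmt_19 {n : ℕ} {ι : Fin n → Type*} [∀ j, Fintype (ι j)]
    (hdim : ∀ j, 2 ≤ Fintype.card (ι j))
    (ψ : Fin 3 → EuclideanSpace ℂ (∀ j, ι j))
    (h : LinearIndependent ℂ ψ) :
    ∃ (x : Fin 3) (a : ∀ j, EuclideanSpace ℂ (ι j)),
      (∀ i, i ≠ x → (inner ℂ (ψ i) (prodVec a) : ℂ) = 0) ∧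
      (inner ℂ (ψ x) (prodVec a) : ℂ) ≠ 0 := by
  classical
  set T : Fin 3 → ((∀ j, ι j) → ℂ) := fun i f => (starRingEnd ℂ) (ψ i f) with hTdef
  have key : ∀ (i : Fin 3) (b : ∀ j, ι j → ℂ),
      (inner ℂ (ψ i) (prodVec (fun j => (WithLp.toLp 2 (b j) : EuclideanSpace ℂ (ι j)))) : ℂ) =
        Stmt19.mulEval (T i) b := by
    intro i b
    rw [PiLp.inner_apply]
    unfold Stmt19.mulEval
    refine Finset.sum_congr rfl fun f _ => ?_
    rw [RCLike.inner_apply, mul_comm]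
    rfl
  have hT : LinearIndependent ℂ T := by
    rw [Fintype.linearIndependent_iff]
    intro g hg i
    rw [Fin.sum_univ_three] at hg
    have hpsi : (starRingEnd ℂ) (g 0) • ψ 0 + (starRingEnd ℂ) (g 1) • ψ 1 +
        (starRingEnd ℂ) (g 2) • ψ 2 = 0 := by
      apply PiLp.ext
      intro f
      have hf := congrFun hg f
      simp only [hTdef, Pi.add_apply, Pi.smul_apply, smul_eq_mul, Pi.zero_apply] at hf
      simp only [PiLp.add_apply, PiLp.smul_apply, PiLp.zero_apply, smul_eq_mul]
      have := congrArg (starRingEnd ℂ) hf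
      simpa [map_add, map_mul] using this
    have hgi := Fintype.linearIndependent_iff.mp h (fun i => (starRingEnd ℂ) (g i)) (by
      rw [Fin.sum_univ_three]; exact hpsi) i
    have := congrArg (starRingEnd ℂ) hgi
    simpa using this
  obtain ⟨x, b, hb1, hb2⟩ := Stmt19.core n ι T hT
  refine ⟨x, fun j => (WithLp.toLp 2 (b j) : EuclideanSpace ℂ (ι j)), fun i hi => ?_, ?_⟩
  · rw [key i b]; exact hb1 i hi
  · rw [key x b]; exact hb2
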